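/- Let n ≥ 8, m = n−4, and 4 ≤ k ≤ m. In Sym(2n), with t₃ = (2,3)(n+2,n+3)(6,7)(n+6,n+7) and tᵢ = (i+3,i+4)(n+i+3,n+i+4) for 4 ≤ i ≤ k, the subgroup ⟨t₃, t₄, ..., t_k⟩ is isomorphic to ℤ₂ × Sym(k−1). -/

import Mathlib

open Equiv

/-- The generators `t₁, …, t_m` (`m = n − 4`) of the second family, as
permutations of `ℕ` (elements of `Sym(2n)` on `{1,…,2n}`):
`t₁ = (2,3)(n+2,n+3)(4,5)(n+4,n+5)∏_{i=6}^{n}(i,n+i)`,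
`t₂ = (1,2)(n+1,n+2)(3,4)(n+3,n+4)(5,6)(n+5,n+6)∏_{i=7}^{n}(i,n+i)`,
`t₃ = (2,3)(n+2,n+3)(6,7)(n+6,n+7)`, and
`t_k = (k+3,k+4)(n+k+3,n+k+4)` for `k ≥ 4`. -/
def t (n k : ℕ) : Equiv.Perm ℕ :=
  if k = 1 then
    Equiv.swap 2 3 * Equiv.swap (n+2) (n+3) * Equiv.swap 4 5 * Equiv.swap (n+4) (n+5) *
      ((List.range (n - 5)).map (fun j => Equiv.swap (6 + j) (n+6+j))).prod
  else if k = 2 then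
    Equiv.swap 1 2 * Equiv.swap (n+1) (n+2) * Equiv.swap 3 4 * Equiv.swap (n+3) (n+4) *
      Equiv.swap 5 6 * Equiv.swap (n+5) (n+6) *
      ((List.range (n - 6)).map (fun j => Equiv.swap (7 + j) (n+7+j))).prod
  else if k = 3 then
    Equiv.swap 2 3 * Equiv.swap (n+2) (n+3) * Equiv.swap 6 7 * Equiv.swap (n+6) (n+7)
  else
    Equiv.swap (k+3) (k+4) * Equiv.swap (n+k+3) (n+k+4)

/-- The product `t₁t₂⋯t_k` of the first `k` generators in increasing order. -/
def tProd (n k : ℕ) : Equiv.Perm ℕ :=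
  ((List.range k).map (fun i => t n (i+1))).prod

/-- `∏_{i=1}^{k}(i, n+i)`. -/
def bigSwap (n k : ℕ) : Equiv.Perm ℕ :=
  ((List.range k).map (fun i => Equiv.swap (i+1) (n+(i+1)))).prod

namespace G3kAux


/-- The equiv between `Fin m` and the interval `[a, a+m)` in `ℕ`. -/
def shiftEquiv' (a m : ℕ) : Fin m ≃ {x : ℕ // a ≤ x ∧ x < a + m} where
  toFun j := ⟨a + j.1, Nat.le_add_right _ _, by have := j.2; omega⟩
  invFun x := ⟨x.1 - a, by have := x.2; omega⟩
  left_inv j := by ext; simp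
  right_inv x := by have := x.2; ext; simp; omega

/-- Extension of a permutation of `Fin m` to `ℕ`, acting on `[a, a+m)`. -/
def E (a m : ℕ) : Perm (Fin m) →* Perm ℕ :=
  Equiv.Perm.extendDomainHom (shiftEquiv' a m)

lemma E_not (a m : ℕ) (σ : Perm (Fin m)) {x : ℕ} (h : ¬(a ≤ x ∧ x < a + m)) :
    E a m σ x = x :=
  Equiv.Perm.extendDomain_apply_not_subtype _ _ h

lemma E_mem (a m : ℕ) (σ : Perm (Fin m)) (j : Fin m) :
    E a m σ (a + j.1) = a + (σ j).1 := by
  have h := Equiv.Perm.extendDomain_apply_image σ (shiftEquiv' a m) j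
  simpa [shiftEquiv', E, Equiv.Perm.extendDomainHom] using h

lemma E_swap (a m : ℕ) (i j : Fin m) :
    E a m (Equiv.swap i j) = Equiv.swap (a + i.1) (a + j.1) := by
  ext x
  by_cases h : a ≤ x ∧ x < a + m
  · have hx : x = a + (⟨x - a, by omega⟩ : Fin m).1 := by simp; omega
    rw [hx, E_mem]
    set jx : Fin m := ⟨x - a, by omega⟩ with hjx
    by_cases h1 : jx = i
    · rw [h1, swap_apply_left, swap_apply_left]
    · by_cases h2 : jx = j
      · rw [h2, swap_apply_right, swap_apply_right]
      · rw [swap_apply_of_ne_of_ne h1 h2, swap_apply_of_ne_of_ne]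
        · intro hc; exact h1 (Fin.ext (by omega))
        · intro hc; exact h2 (Fin.ext (by omega))
  · rw [E_not _ _ _ h, swap_apply_of_ne_of_ne]
    · have := i.2; omega
    · have := j.2; omega

/-- The central element `(2,3)(n+2,n+3)`. -/
def cSwap (n : ℕ) : Perm ℕ := Equiv.swap 2 3 * Equiv.swap (n+2) (n+3)

lemma cSwap_fix {n x : ℕ} (h2 : x ≠ 2) (h3 : x ≠ 3) (hn2 : x ≠ n+2) (hn3 : x ≠ n+3) :
    cSwap n x = x := by
  simp [cSwap, Equiv.Perm.mul_apply, swap_apply_of_ne_of_ne, h2, h3, hn2, hn3]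

lemma cSwap_two {n : ℕ} (hn : 8 ≤ n) : cSwap n 2 = 3 := by
  have h1 : (2:ℕ) ≠ n+2 := by omega
  have h2 : (2:ℕ) ≠ n+3 := by omega
  simp [cSwap, Equiv.Perm.mul_apply, swap_apply_of_ne_of_ne h1 h2]

lemma cSwap_comm_swaps {n : ℕ} (hn : 8 ≤ n) :
    Commute (Equiv.swap 2 3 : Perm ℕ) (Equiv.swap (n+2) (n+3)) := by
  apply Equiv.Perm.Disjoint.commute
  intro x
  by_cases h : x = 2 ∨ x = 3
  · right; apply swap_apply_of_ne_of_ne <;> omega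
  · left; push_neg at h; exact swap_apply_of_ne_of_ne h.1 h.2

lemma cSwap_sq {n : ℕ} (hn : 8 ≤ n) : cSwap n ^ 2 = 1 := by
  rw [cSwap, (cSwap_comm_swaps hn).mul_pow, sq, swap_mul_self, sq, swap_mul_self, one_mul]

end G3kAux

open G3kAux

/-- For `n ≥ 8`, `m = n − 4` and `4 ≤ k ≤ m`, the subgroup `⟨t₃,t₄,…,t_k⟩` of
`Sym(2n)` is isomorphic to `ℤ₂ × Sym(k−1)`. -/
theorem G3k_iso (n : ℕ) (hn : 8 ≤ n) (m : ℕ) (hm : m = n - 4)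
    (k : ℕ) (hk4 : 4 ≤ k) (hkm : k ≤ m) :
    Nonempty ((Subgroup.closure {x | x = t n 3 ∨ ∃ i, 4 ≤ i ∧ i ≤ k ∧ x = t n i} :
      Subgroup (Equiv.Perm ℕ)) ≃* (Multiplicative (ZMod 2) × Equiv.Perm (Fin (k - 1)))) := by
  subst hm
  obtain ⟨k', rfl⟩ : ∃ k', k = k' + 4 := ⟨k - 4, by omega⟩
  have hkn : k' + 8 ≤ n := by omega
  clear hk4 hkm
  set K : ℕ := k' + 3 with hK
  have hc2 : cSwap n ^ 2 = 1 := cSwap_sq hn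
  -- the homomorphism ψ₁ : ZMod 2 → Perm ℕ
  let ψ₁ : Multiplicative (ZMod 2) →* Perm ℕ :=
    { toFun := fun x => cSwap n ^ (Multiplicative.toAdd x).val
      map_one' := by simp
      map_mul' := fun a b => by
        simp only [toAdd_mul, ZMod.val_add, ← pow_eq_pow_mod _ hc2, pow_add] }
  have hcomm12 : ∀ σ τ : Perm (Fin K), Commute (E 6 K σ) (E (n+6) K τ) := by
    intro σ τ
    apply Equiv.Perm.Disjoint.commute
    intro x
    by_cases h : 6 ≤ x ∧ x < 6 + K
    · right; exact E_not _ _ _ (by omega)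
    · left; exact E_not _ _ _ h
  let ψ₂ : Perm (Fin K) →* Perm ℕ :=
    (MonoidHom.noncommCoprod (E 6 K) (E (n+6) K) hcomm12).comp
      ((MonoidHom.id _).prod (MonoidHom.id _))
  have hψ₂ : ∀ σ, ψ₂ σ = E 6 K σ * E (n+6) K σ := fun σ => rfl
  have hcE : ∀ σ : Perm (Fin K), Commute (cSwap n) (E 6 K σ) := by
    intro σ
    apply Equiv.Perm.Disjoint.commute
    intro x
    by_cases h : 6 ≤ x ∧ x < 6 + K
    · left; exact cSwap_fix (by omega) (by omega) (by omega) (by omega)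
    · right; exact E_not _ _ _ h
  have hcE' : ∀ σ : Perm (Fin K), Commute (cSwap n) (E (n+6) K σ) := by
    intro σ
    apply Equiv.Perm.Disjoint.commute
    intro x
    by_cases h : n + 6 ≤ x ∧ x < n + 6 + K
    · left; exact cSwap_fix (by omega) (by omega) (by omega) (by omega)
    · right; exact E_not _ _ _ h
  have hcommc : ∀ (x : Multiplicative (ZMod 2)) (σ : Perm (Fin K)),
      Commute (ψ₁ x) (ψ₂ σ) := by
    intro x σ
    rw [hψ₂]
    exact (((hcE σ).mul_right (hcE' σ))).pow_left _
  let φ : Multiplicative (ZMod 2) × Perm (Fin K) →* Perm ℕ :=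
    MonoidHom.noncommCoprod ψ₁ ψ₂ hcommc
  have hφ : ∀ p : Multiplicative (ZMod 2) × Perm (Fin K),
      φ p = cSwap n ^ (Multiplicative.toAdd p.1).val * (E 6 K p.2 * E (n+6) K p.2) :=
    fun p => rfl
  -- distinguished elements of Fin K
  have hK3 : 3 ≤ K := by omega
  set f0 : Fin K := ⟨0, by omega⟩ with hf0
  set f1 : Fin K := ⟨1, by omega⟩ with hf1
  set f2 : Fin K := ⟨2, by omega⟩ with hf2
  have hf01 : f0 ≠ f1 := by simp [hf0, hf1, Fin.ext_iff]
  have hf12 : f1 ≠ f2 := by simp [hf1, hf2, Fin.ext_iff]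
  have hf02 : f0 ≠ f2 := by simp [hf0, hf2, Fin.ext_iff]
  -- evaluation on the generators
  have hφ3 : φ (Multiplicative.ofAdd (1 : ZMod 2), Equiv.swap f0 f1) = t n 3 := by
    rw [hφ, E_swap, E_swap]
    have hv : (Multiplicative.toAdd (Multiplicative.ofAdd (1 : ZMod 2))).val = 1 := by decide
    rw [hv, pow_one, t]
    norm_num [cSwap, mul_assoc, hf0, hf1]
  have hφi : ∀ a b : Fin K, 1 ≤ a.1 → b.1 = a.1 + 1 →
      φ (1, Equiv.swap a b) = t n (a.1 + 3) := by
    intro a b ha hb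
    rw [hφ, E_swap, E_swap, hb]
    have hv : (Multiplicative.toAdd (1 : Multiplicative (ZMod 2))).val = 0 := by decide
    rw [hv, pow_zero, one_mul]
    have e1 : 6 + a.1 = (a.1 + 3) + 3 := by omega
    have e2 : 6 + (a.1 + 1) = (a.1 + 3) + 4 := by omega
    have e3 : n + 6 + a.1 = n + (a.1 + 3) + 3 := by omega
    have e4 : n + 6 + (a.1 + 1) = n + (a.1 + 3) + 4 := by omega
    rw [e1, e2, e3, e4, t, if_neg (by omega), if_neg (by omega), if_neg (by omega)]
  -- injectivity of φ
  have hψfix : ∀ (x : Multiplicative (ZMod 2)) (y : ℕ), y ≠ 2 → y ≠ 3 → y ≠ n + 2 → y ≠ n + 3 →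
      (cSwap n ^ (Multiplicative.toAdd x).val) y = y := by
    intro x y h2 h3 hn2 hn3
    have hv : (Multiplicative.toAdd x).val = 0 ∨ (Multiplicative.toAdd x).val = 1 := by
      have := ZMod.val_lt (Multiplicative.toAdd x); omega
    rcases hv with h | h
    · rw [h, pow_zero]; rfl
    · rw [h, pow_one]; exact cSwap_fix h2 h3 hn2 hn3
  have hinj : Function.Injective φ := by
    rw [injective_iff_map_eq_one]
    rintro ⟨x, σ⟩ h
    rw [hφ] at h
    have hσ : σ = 1 := by
      ext j
      have happ := Equiv.ext_iff.mp h (6 + j.1)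
      rw [Equiv.Perm.mul_apply, Equiv.Perm.mul_apply,
        E_not (n+6) K σ (by have := j.2; omega), E_mem] at happ
      have hfix := hψfix x (6 + (σ j).1) (by omega) (by omega)
        (by have := (σ j).2; omega) (by have := (σ j).2; omega)
      rw [hfix] at happ
      simpa using Nat.add_left_cancel (happ.trans rfl)
    rw [hσ] at h
    simp only [map_one, mul_one] at h
    have hv : (Multiplicative.toAdd x).val = 0 ∨ (Multiplicative.toAdd x).val = 1 := by
      have := ZMod.val_lt (Multiplicative.toAdd x); omega
    have hx : x = 1 := by
      rcases hv with hval | hval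
      · have : Multiplicative.toAdd x = 0 := (ZMod.val_eq_zero _).mp hval
        rw [← ofAdd_toAdd x, this, ofAdd_zero]
      · exfalso
        rw [hval, pow_one] at h
        have := Equiv.ext_iff.mp h 2
        rw [cSwap_two hn] at this
        simp at this
    rw [hx, hσ]
    rfl
  -- the generating set
  set T : Set (Perm ℕ) :=
    {x | x = t n 3 ∨ ∃ i, 4 ≤ i ∧ i ≤ k' + 4 ∧ x = t n i} with hT
  -- closure T ≤ range φ
  have hle1 : Subgroup.closure T ≤ φ.range := by
    rw [Subgroup.closure_le]
    rintro x (rfl | ⟨i, hi4, hik, rfl⟩)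
    · exact ⟨(Multiplicative.ofAdd 1, Equiv.swap f0 f1), hφ3⟩
    · refine ⟨(1, Equiv.swap ⟨i - 3, by omega⟩ ⟨i - 2, by omega⟩), ?_⟩
      have := hφi ⟨i - 3, by omega⟩ ⟨i - 2, by omega⟩ (by simp; omega) (by simp; omega)
      have hi : (i - 3) + 3 = i := by omega
      rw [this, hi]
  -- range φ ≤ closure T
  have hall : ∀ p, p ∈ Subgroup.comap φ (Subgroup.closure T) := by
    have mem3 : (Multiplicative.ofAdd (1 : ZMod 2), Equiv.swap f0 f1)
        ∈ Subgroup.comap φ (Subgroup.closure T) := by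
      rw [Subgroup.mem_comap, hφ3]
      exact Subgroup.subset_closure (Or.inl rfl)
    have memi : ∀ a b : Fin K, 1 ≤ a.1 → b.1 = a.1 + 1 →
        ((1 : Multiplicative (ZMod 2)), Equiv.swap a b)
          ∈ Subgroup.comap φ (Subgroup.closure T) := by
      intro a b ha hb
      rw [Subgroup.mem_comap, hφi a b ha hb]
      refine Subgroup.subset_closure (Or.inr ⟨a.1 + 3, by omega, by have := b.2; omega, rfl⟩)
    have mems1 : ((1 : Multiplicative (ZMod 2)), Equiv.swap f1 f2)
        ∈ Subgroup.comap φ (Subgroup.closure T) := memi f1 f2 (by rw [hf1]) (by rw [hf1, hf2])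
    -- the conjugation trick to get (1, swap f0 f1)
    have hABA : (Multiplicative.ofAdd (1 : ZMod 2), Equiv.swap f0 f1) *
        ((1 : Multiplicative (ZMod 2)), Equiv.swap f1 f2) *
        (Multiplicative.ofAdd (1 : ZMod 2), Equiv.swap f0 f1)
        = ((1 : Multiplicative (ZMod 2)), Equiv.swap f0 f2) := by
      have hfst : Multiplicative.ofAdd (1 : ZMod 2) * 1 * Multiplicative.ofAdd (1 : ZMod 2)
          = (1 : Multiplicative (ZMod 2)) := by decide
      have hsnd : Equiv.swap f0 f1 * Equiv.swap f1 f2 * Equiv.swap f0 f1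
          = Equiv.swap f0 f2 := by
        rw [swap_comm f0 f1, swap_comm f1 f2]
        exact swap_mul_swap_mul_swap hf12.symm hf02.symm
      rw [Prod.mk_mul_mk, Prod.mk_mul_mk, hfst, hsnd]
    have mems0 : ((1 : Multiplicative (ZMod 2)), Equiv.swap f0 f1)
        ∈ Subgroup.comap φ (Subgroup.closure T) := by
      have h1 := mul_mem (mul_mem mem3 mems1) mem3
      rw [hABA] at h1
      have h2 := mul_mem (mul_mem h1 mems1) h1
      have hW : ((1 : Multiplicative (ZMod 2)), Equiv.swap f0 f2) *
          ((1 : Multiplicative (ZMod 2)), Equiv.swap f1 f2) *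
          ((1 : Multiplicative (ZMod 2)), Equiv.swap f0 f2)
          = ((1 : Multiplicative (ZMod 2)), Equiv.swap f0 f1) := by
        have hsnd : Equiv.swap f0 f2 * Equiv.swap f1 f2 * Equiv.swap f0 f2
            = Equiv.swap f0 f1 := by
          rw [swap_comm f0 f2]
          exact swap_mul_swap_mul_swap hf12 hf01.symm
        rw [Prod.mk_mul_mk, Prod.mk_mul_mk, one_mul, one_mul, hsnd]
      rw [hW] at h2
      exact h2
    have memg : (Multiplicative.ofAdd (1 : ZMod 2), (1 : Perm (Fin K)))
        ∈ Subgroup.comap φ (Subgroup.closure T) := by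
      have h1 := mul_mem mem3 mems0
      rwa [Prod.mk_mul_mk, mul_one, swap_mul_self] at h1
    have htop := Subgroup.closure_eq_top_of_mclosure_eq_top
      (Equiv.Perm.mclosure_swap_castSucc_succ (k' + 2))
    have memσ : ∀ σ : Perm (Fin K), ((1 : Multiplicative (ZMod 2)), σ)
        ∈ Subgroup.comap φ (Subgroup.closure T) := by
      intro σ
      have hσtop : σ ∈ Subgroup.closure
          (Set.range fun i : Fin (k' + 2) => Equiv.swap i.castSucc i.succ) := by
        rw [htop]; trivial
      induction hσtop using Subgroup.closure_induction with
      | mem τ hτ =>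
        obtain ⟨j, rfl⟩ := hτ
        by_cases hj : j.1 = 0
        · have hcs : Equiv.swap j.castSucc j.succ = Equiv.swap f0 f1 := by
            congr 1
            · exact Fin.ext (by simp [hj, hf0])
            · exact Fin.ext (by simp [hj, hf1])
          have h1 := mems0
          rw [← hcs] at h1
          exact h1
        · exact memi j.castSucc j.succ (by simp; omega) (by simp)
      | one => exact one_mem _
      | mul σ τ hσc hτc ihσ ihτ =>
        have h1 := mul_mem ihσ ihτ
        rwa [Prod.mk_mul_mk, one_mul] at h1
      | inv σ hσc ih =>
        have h1 := inv_mem ih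
        rwa [Prod.inv_mk, inv_one] at h1
    intro p
    obtain ⟨x, σ⟩ := p
    have hx : x = 1 ∨ x = Multiplicative.ofAdd (1 : ZMod 2) := by
      have h2 : ∀ z : ZMod 2, z = 0 ∨ z = 1 := by decide
      rcases h2 (Multiplicative.toAdd x) with h | h
      · left; rw [← ofAdd_toAdd x, h]; rfl
      · right; rw [← ofAdd_toAdd x, h]
    rcases hx with rfl | rfl
    · exact memσ σ
    · have h1 := mul_mem memg (memσ σ)
      rwa [Prod.mk_mul_mk, mul_one, one_mul] at h1
  have heq : Subgroup.closure T = φ.range := by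
    refine le_antisymm hle1 ?_
    rintro x ⟨p, rfl⟩
    exact hall p
  exact ⟨(MulEquiv.subgroupCongr heq).trans (MonoidHom.ofInjective hinj).symm⟩
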